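/- arXiv:2003.00518 — 2 statements merged into one kernel-verified Lean document; each statement's English description precedes it below -/
import Mathlib

section
/- Let L be a set of n ≥ 2 distinct non-vertical lines in the plane whose upper envelope contains a bounded edge (equivalently, the upper envelope has at least two vertices). Then the upper level of every maximum-level vertex of the arrangement of L is at most 2·log₂ n. Equivalently, the smallest index k₀ for which some vertex of the arrangement lies strictly above the k₀-upper level satisfies k₀ ≤ 2·log₂ n. -/
open Finset
open scoped Classical

noncomputable section

/-- A non-vertical line `y = a x + b` in the plane is represented by the pair `(a, b)`;
a point is a pair `(x, y)`. -/
def evalLine (l : ℝ × ℝ) (x : ℝ) : ℝ := l.1 * x + l.2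

/-- The line `l` passes strictly below the point `p`. -/
def Below (l : ℝ × ℝ) (p : ℝ × ℝ) : Prop := evalLine l p.1 < p.2

/-- The line `l` passes strictly above the point `p`. -/
def Above (l : ℝ × ℝ) (p : ℝ × ℝ) : Prop := p.2 < evalLine l p.1

/-- The point `p` lies on the line `l`. -/
def OnLine (l : ℝ × ℝ) (p : ℝ × ℝ) : Prop := evalLine l p.1 = p.2

/-- The level of a point: number of lines of `L` strictly below it. -/
def levelCount (L : Finset (ℝ × ℝ)) (p : ℝ × ℝ) : ℕ :=
  (L.filter (fun l => Below l p)).card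

/-- The upper level of a point: number of lines of `L` strictly above it. -/
def upperCount (L : Finset (ℝ × ℝ)) (p : ℝ × ℝ) : ℕ :=
  (L.filter (fun l => Above l p)).card

/-- The number of lines of `L` passing through a point. -/
def throughCount (L : Finset (ℝ × ℝ)) (p : ℝ × ℝ) : ℕ :=
  (L.filter (fun l => OnLine l p)).card

/-- The value of the upper envelope of `L` at abscissa `x`. -/
def envVal (L : Finset (ℝ × ℝ)) (hL : L.Nonempty) (x : ℝ) : ℝ :=
  L.sup' hL (fun l => evalLine l x)

/-- A vertex of the upper envelope of `L`. -/
def EnvelopeVertex (L : Finset (ℝ × ℝ)) (hL : L.Nonempty) (p : ℝ × ℝ) : Prop :=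
  p.2 = envVal L hL p.1 ∧ 2 ≤ throughCount L p

/- ### Auxiliary development -/

lemma evalLine_cont (l : ℝ × ℝ) : Continuous (evalLine l) := by
  unfold evalLine; fun_prop

lemma line_eq_of_eval_eq {l₁ l₂ : ℝ × ℝ} {x₁ x₂ : ℝ} (hx : x₁ ≠ x₂)
    (h₁ : evalLine l₁ x₁ = evalLine l₂ x₁) (h₂ : evalLine l₁ x₂ = evalLine l₂ x₂) :
    ∀ x, evalLine l₁ x = evalLine l₂ x := by
  intro x
  unfold evalLine at *
  have hs : l₁.1 = l₂.1 := by
    rcases mul_eq_zero.mp (show (l₁.1 - l₂.1) * (x₁ - x₂) = 0 by nlinarith) with h | h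
    · linarith
    · exact absurd (by linarith) hx
  have hb : l₁.2 = l₂.2 := by rw [hs] at h₁; linarith
  rw [hs, hb]

/-- Intersection point of two lines. -/
def ip (l₁ l₂ : ℝ × ℝ) : ℝ × ℝ :=
  ((l₂.2 - l₁.2) / (l₁.1 - l₂.1), l₁.1 * ((l₂.2 - l₁.2) / (l₁.1 - l₂.1)) + l₁.2)

/-- The finite set of arrangement vertices. -/
def VertF (L : Finset (ℝ × ℝ)) : Finset (ℝ × ℝ) :=
  (L.offDiag.filter fun pq => pq.1.1 ≠ pq.2.1).image fun pq => ip pq.1 pq.2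

lemma mem_VertF {L : Finset (ℝ × ℝ)} {p : ℝ × ℝ} :
    p ∈ VertF L ↔ 2 ≤ throughCount L p := by
  constructor
  · intro hp
    obtain ⟨⟨l₁, l₂⟩, hmem, hip⟩ := mem_image.mp hp
    obtain ⟨hoff, hslope⟩ := mem_filter.mp hmem
    obtain ⟨h₁, h₂, hne⟩ := Finset.mem_offDiag.mp hoff
    have hd : l₁.1 - l₂.1 ≠ 0 := fun h => hslope (by linarith)
    have hOn₁ : OnLine l₁ p := by
      rw [← hip]; show evalLine l₁ (ip l₁ l₂).1 = (ip l₁ l₂).2; rfl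
    have hOn₂ : OnLine l₂ p := by
      rw [← hip]; show evalLine l₂ (ip l₁ l₂).1 = (ip l₁ l₂).2
      show l₂.1 * ((l₂.2 - l₁.2) / (l₁.1 - l₂.1)) + l₂.2
        = l₁.1 * ((l₂.2 - l₁.2) / (l₁.1 - l₂.1)) + l₁.2
      field_simp
      ring
    have hsub : ({l₁, l₂} : Finset (ℝ × ℝ)) ⊆ L.filter (fun l => OnLine l p) := by
      intro l hl
      rcases Finset.mem_insert.mp hl with h | h
      · subst h; exact mem_filter.mpr ⟨h₁, hOn₁⟩
      · rw [Finset.mem_singleton.mp h]; exact mem_filter.mpr ⟨h₂, hOn₂⟩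
    calc 2 = ({l₁, l₂} : Finset (ℝ × ℝ)).card := (Finset.card_pair hne).symm
      _ ≤ _ := card_le_card hsub
  · intro h
    obtain ⟨l₁, hl₁, l₂, hl₂, hne⟩ := Finset.one_lt_card.mp h
    obtain ⟨h₁, hOn₁⟩ := mem_filter.mp hl₁
    obtain ⟨h₂, hOn₂⟩ := mem_filter.mp hl₂
    unfold OnLine evalLine at hOn₁ hOn₂
    have hslope : l₁.1 ≠ l₂.1 := by
      intro hs
      apply hne
      have : l₁.2 = l₂.2 := by rw [hs] at hOn₁; linarith
      exact Prod.ext hs this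
    have hd : l₁.1 - l₂.1 ≠ 0 := fun h => hslope (by linarith)
    have hx : p.1 = (l₂.2 - l₁.2) / (l₁.1 - l₂.1) := by
      field_simp
      linarith
    refine mem_image.mpr ⟨(l₁, l₂), mem_filter.mpr ⟨Finset.mem_offDiag.mpr ⟨h₁, h₂, hne⟩, hslope⟩, ?_⟩
    have hy : p.2 = l₁.1 * ((l₂.2 - l₁.2) / (l₁.1 - l₂.1)) + l₁.2 := by
      rw [← hx]; linarith
    exact (Prod.ext hx.symm hy.symm : ip l₁ l₂ = p)

/-- x-coordinates of arrangement vertices (crossing abscissas). -/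
def Xc (L : Finset (ℝ × ℝ)) : Finset ℝ := (VertF L).image Prod.fst

lemma eval_ne_of_not_crossing {L : Finset (ℝ × ℝ)} {x : ℝ} (hx : x ∉ Xc L)
    {l₁ l₂ : ℝ × ℝ} (h₁ : l₁ ∈ L) (h₂ : l₂ ∈ L) (hne : l₁ ≠ l₂) :
    evalLine l₁ x ≠ evalLine l₂ x := by
  intro he
  apply hx
  have htc : 2 ≤ throughCount L (x, evalLine l₁ x) := by
    have hsub : ({l₁, l₂} : Finset (ℝ × ℝ)) ⊆ L.filter (fun l => OnLine l (x, evalLine l₁ x)) := by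
      intro l hl
      rcases Finset.mem_insert.mp hl with h | h
      · subst h; exact mem_filter.mpr ⟨h₁, rfl⟩
      · rw [Finset.mem_singleton.mp h]; exact mem_filter.mpr ⟨h₂, he.symm⟩
    calc 2 = ({l₁, l₂} : Finset (ℝ × ℝ)).card := (Finset.card_pair hne).symm
      _ ≤ _ := card_le_card hsub
  exact mem_image.mpr ⟨_, mem_VertF.mpr htc, rfl⟩

lemma eval_lt_iff_of_no_crossing {L : Finset (ℝ × ℝ)} {a b : ℝ}
    (hX : ∀ x ∈ Set.Ioo a b, x ∉ Xc L)
    {l l₀ : ℝ × ℝ} (hl : l ∈ L) (hl₀ : l₀ ∈ L) (hne : l ≠ l₀)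
    {x x₀ : ℝ} (hx : x ∈ Set.Ioo a b) (hx₀ : x₀ ∈ Set.Ioo a b) :
    (evalLine l₀ x < evalLine l x ↔ evalLine l₀ x₀ < evalLine l x₀) := by
  set c₁ := l.1 - l₀.1 with hc₁
  set c₂ := l.2 - l₀.2 with hc₂
  have hd : ∀ t, evalLine l t - evalLine l₀ t = c₁ * t + c₂ := by
    intro t; unfold evalLine; rw [hc₁, hc₂]; ring
  by_cases h1 : c₁ = 0
  · have e1 := hd x; have e2 := hd x₀
    rw [h1, zero_mul, zero_add] at e1 e2
    constructor <;> intro h <;> linarith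
  · set r := -c₂ / c₁ with hr
    have hroot : c₁ * r + c₂ = 0 := by rw [hr]; field_simp; ring
    have hrout : r ∉ Set.Ioo a b := by
      intro hrmem
      have hcr : evalLine l r ≠ evalLine l₀ r := eval_ne_of_not_crossing (hX r hrmem) hl hl₀ hne
      apply hcr
      have := hd r
      linarith
    have hr2 : r ≤ a ∨ b ≤ r := by
      by_contra hcon
      push_neg at hcon
      exact hrout ⟨hcon.1, hcon.2⟩
    obtain ⟨hxa, hxb⟩ := hx
    obtain ⟨hx₀a, hx₀b⟩ := hx₀
    have hdx := hd x
    have hdx₀ := hd x₀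
    rcases hr2 with hr2 | hr2
    · constructor <;> intro h
      · nlinarith
      · nlinarith
    · constructor <;> intro h
      · nlinarith
      · nlinarith
/-- The value of the `k`-upper level at abscissa `x`: the `(k+1)`-th largest among the
values `evalLine l x`, `l ∈ L`. -/
def g (L : Finset (ℝ × ℝ)) (k : ℕ) (x : ℝ) : ℝ :=
  if h : (L.powersetCard (k + 1)).Nonempty then
    (L.powersetCard (k + 1)).attach.sup' (Finset.attach_nonempty_iff.mpr h)
      (fun S => S.1.inf' (Finset.card_pos.mp (by
        rw [(Finset.mem_powersetCard.mp S.2).2]; omega)) (fun l => evalLine l x))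
  else 0

variable {L : Finset (ℝ × ℝ)} {k : ℕ} {x y : ℝ}

lemma le_g (h : k + 1 ≤ (L.filter fun l => y ≤ evalLine l x).card) : y ≤ g L k x := by
  obtain ⟨S, hS, hcard⟩ := Finset.exists_subset_card_eq h
  have hSp : S ∈ L.powersetCard (k + 1) :=
    Finset.mem_powersetCard.mpr ⟨hS.trans (filter_subset _ _), hcard⟩
  have hne : (L.powersetCard (k + 1)).Nonempty := ⟨S, hSp⟩
  rw [g, dif_pos hne]
  refine le_trans ?_ (Finset.le_sup' _ (mem_attach _ ⟨S, hSp⟩))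
  rw [Finset.le_inf'_iff]
  intro l hl
  exact (mem_filter.mp (hS hl)).2

lemma g_le (hk : k + 1 ≤ L.card) (h : (L.filter fun l => y < evalLine l x).card ≤ k) :
    g L k x ≤ y := by
  have hne : (L.powersetCard (k + 1)).Nonempty := powersetCard_nonempty.mpr hk
  rw [g, dif_pos hne, Finset.sup'_le_iff]
  rintro ⟨S, hS⟩ -
  obtain ⟨hSL, hScard⟩ := Finset.mem_powersetCard.mp hS
  have hnsub : ¬ S ⊆ L.filter (fun l => y < evalLine l x) := by
    intro hsub
    have := card_le_card hsub
    omega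
  obtain ⟨l, hlS, hl⟩ := Finset.not_subset.mp hnsub
  have hle : evalLine l x ≤ y := by
    by_contra hcon
    exact hl (mem_filter.mpr ⟨hSL hlS, lt_of_not_ge hcon⟩)
  exact le_trans (Finset.inf'_le _ hlS) hle

lemma g_attain (hk : k + 1 ≤ L.card) :
    ∃ S ∈ L.powersetCard (k + 1),
      (∀ l ∈ S, g L k x ≤ evalLine l x) ∧ ∃ l ∈ S, evalLine l x = g L k x := by
  have hne : (L.powersetCard (k + 1)).Nonempty := powersetCard_nonempty.mpr hk
  rw [g, dif_pos hne]
  obtain ⟨S₀, -, hS₀⟩ := Finset.exists_mem_eq_sup' (Finset.attach_nonempty_iff.mpr hne)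
    (fun S : {S // S ∈ L.powersetCard (k + 1)} => S.1.inf' (Finset.card_pos.mp (by
      rw [(Finset.mem_powersetCard.mp S.2).2]; omega)) (fun l => evalLine l x))
  refine ⟨S₀.1, S₀.2, ?_, ?_⟩
  · intro l hl
    rw [hS₀]
    exact Finset.inf'_le _ hl
  · obtain ⟨l, hl, hval⟩ := Finset.exists_mem_eq_inf' (f := fun l => evalLine l x)
      (Finset.card_pos.mp (by rw [(Finset.mem_powersetCard.mp S₀.2).2]; omega))
    exact ⟨l, hl, by rw [hS₀, hval]⟩

lemma card_ge_g (hk : k + 1 ≤ L.card) :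
    k + 1 ≤ (L.filter fun l => g L k x ≤ evalLine l x).card := by
  obtain ⟨S, hSp, h1, -⟩ := g_attain (x := x) hk
  obtain ⟨hSL, hScard⟩ := Finset.mem_powersetCard.mp hSp
  calc k + 1 = S.card := hScard.symm
    _ ≤ _ := card_le_card (fun l hl => mem_filter.mpr ⟨hSL hl, h1 l hl⟩)

lemma card_gt_g (hk : k + 1 ≤ L.card) :
    (L.filter fun l => g L k x < evalLine l x).card ≤ k := by
  by_contra hcon
  push_neg at hcon
  obtain ⟨S, hsub, hcard⟩ := Finset.exists_subset_card_eq (n := k + 1) hcon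
  have hSp : S ∈ L.powersetCard (k + 1) :=
    Finset.mem_powersetCard.mpr ⟨hsub.trans (filter_subset _ _), hcard⟩
  have hSne : S.Nonempty := Finset.card_pos.mp (by omega)
  have hne : (L.powersetCard (k + 1)).Nonempty := ⟨S, hSp⟩
  have h1 : S.inf' hSne (fun l => evalLine l x) ≤ g L k x := by
    rw [g, dif_pos hne]
    exact Finset.le_sup' (fun S : {S // S ∈ L.powersetCard (k + 1)} => S.1.inf'
      (Finset.card_pos.mp (by rw [(Finset.mem_powersetCard.mp S.2).2]; omega))
      (fun l => evalLine l x)) (mem_attach _ ⟨S, hSp⟩)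
  have h2 : g L k x < S.inf' hSne (fun l => evalLine l x) :=
    (Finset.lt_inf'_iff hSne).mpr (fun l hl => (mem_filter.mp (hsub hl)).2)
  linarith

lemma exists_line_g (hk : k + 1 ≤ L.card) : ∃ l ∈ L, evalLine l x = g L k x := by
  have h1 := card_ge_g (x := x) hk
  have h2 := card_gt_g (x := x) hk
  have hne : ((L.filter fun l => g L k x ≤ evalLine l x) \
      (L.filter fun l => g L k x < evalLine l x)).Nonempty := by
    rw [Finset.sdiff_nonempty]
    intro hsub
    have := card_le_card hsub
    omega
  obtain ⟨l, hl⟩ := hne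
  obtain ⟨hl1, hl2⟩ := Finset.mem_sdiff.mp hl
  obtain ⟨hlL, hge⟩ := mem_filter.mp hl1
  refine ⟨l, hlL, le_antisymm ?_ hge⟩
  by_contra hcon
  exact hl2 (mem_filter.mpr ⟨hlL, lt_of_not_ge hcon⟩)

lemma g_succ_le (hk : k + 2 ≤ L.card) : g L (k + 1) x ≤ g L k x :=
  g_le hk (le_trans (card_gt_g (by omega)) (by omega))
lemma upperCount_def (L : Finset (ℝ × ℝ)) (p : ℝ × ℝ) :
    upperCount L p = (L.filter fun l => p.2 < evalLine l p.1).card := rfl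

lemma up_add_through (L : Finset (ℝ × ℝ)) (p : ℝ × ℝ) :
    upperCount L p + throughCount L p = (L.filter fun l => p.2 ≤ evalLine l p.1).card := by
  unfold upperCount throughCount
  rw [← card_union_of_disjoint]
  · rw [← filter_or]
    apply congrArg
    apply filter_congr
    intro l _
    unfold Above OnLine
    constructor
    · rintro (h | h)
      · exact le_of_lt h
      · exact le_of_eq h.symm
    · intro h
      rcases lt_or_eq_of_le h with h | h
      · exact Or.inl h
      · exact Or.inr h.symm
  · rw [Finset.disjoint_left]
    intro l h1 h2
    have ha := (mem_filter.mp h1).2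
    have hb := (mem_filter.mp h2).2
    unfold Above at ha; unfold OnLine at hb
    linarith

lemma count_partition (L : Finset (ℝ × ℝ)) (p : ℝ × ℝ) :
    levelCount L p + upperCount L p + throughCount L p = L.card := by
  unfold levelCount upperCount throughCount
  rw [← card_union_of_disjoint, ← card_union_of_disjoint, ← filter_or, ← filter_or]
  · rw [Finset.filter_true_of_mem]
    intro l _
    unfold Below Above OnLine
    rcases lt_trichotomy (evalLine l p.1) p.2 with h | h | h
    · exact Or.inl (Or.inl h)
    · exact Or.inr h
    · exact Or.inl (Or.inr h)
  · rw [Finset.disjoint_left]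
    intro l h1 h2
    have hb := (mem_filter.mp h2).2
    unfold OnLine at hb
    rcases Finset.mem_union.mp h1 with h1 | h1 <;>
      [have ha := (mem_filter.mp h1).2; have ha := (mem_filter.mp h1).2] <;>
      [unfold Below at ha; unfold Above at ha] <;> linarith
  · rw [Finset.disjoint_left]
    intro l h1 h2
    have ha := (mem_filter.mp h1).2
    have hb := (mem_filter.mp h2).2
    unfold Below at ha
    unfold Above at hb
    linarith

/-- A point is on the `k`-upper level. -/
def OnLevel (L : Finset (ℝ × ℝ)) (k : ℕ) (p : ℝ × ℝ) : Prop := g L k p.1 = p.2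

lemma onLevel_iff {L : Finset (ℝ × ℝ)} {k : ℕ} {p : ℝ × ℝ} (hk : k + 1 ≤ L.card) :
    OnLevel L k p ↔ (upperCount L p ≤ k ∧ k + 1 ≤ upperCount L p + throughCount L p) := by
  constructor
  · intro h
    constructor
    · rw [upperCount_def, ← h]
      exact card_gt_g hk
    · rw [up_add_through, ← h]
      exact card_ge_g hk
  · rintro ⟨h1, h2⟩
    rw [upperCount_def] at h1
    rw [up_add_through] at h2
    exact le_antisymm (g_le hk h1) (le_g h2)

lemma g_zero {L : Finset (ℝ × ℝ)} (hL : L.Nonempty) (x : ℝ) :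
    g L 0 x = envVal L hL x := by
  unfold envVal
  apply le_antisymm
  · apply g_le (by have := Finset.card_pos.mpr hL; omega)
    have he : L.filter (fun l => L.sup' hL (fun l' => evalLine l' x) < evalLine l x) = ∅ := by
      apply Finset.filter_eq_empty_iff.mpr
      intro l hl
      exact not_lt.mpr (Finset.le_sup' (fun l' => evalLine l' x) hl)
    rw [he, card_empty]
  · apply le_g
    obtain ⟨l, hl, hval⟩ := Finset.exists_mem_eq_sup' hL (fun l' => evalLine l' x)
    have hmem : l ∈ L.filter (fun l₂ => L.sup' hL (fun l' => evalLine l' x) ≤ evalLine l₂ x) :=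
      mem_filter.mpr ⟨hl, le_of_eq hval⟩
    have := Finset.card_pos.mpr ⟨l, hmem⟩
    omega

lemma continuous_sup' {ι : Type*} (s : Finset ι) (hs : s.Nonempty) (f : ι → ℝ → ℝ)
    (hf : ∀ i, Continuous (f i)) : Continuous fun x => s.sup' hs fun i => f i x := by
  induction hs using Finset.Nonempty.cons_induction with
  | singleton a => simp only [Finset.sup'_singleton]; exact hf a
  | cons a s ha hs ih =>
    have heq : (fun x => (Finset.cons a s ha).sup' (Finset.cons_nonempty ha) fun i => f i x)
        = fun x => f a x ⊔ s.sup' hs fun i => f i x := by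
      funext x
      exact Finset.sup'_cons hs (fun i => f i x)
    rw [heq]
    exact (hf a).sup ih

lemma continuous_inf' {ι : Type*} (s : Finset ι) (hs : s.Nonempty) (f : ι → ℝ → ℝ)
    (hf : ∀ i, Continuous (f i)) : Continuous fun x => s.inf' hs fun i => f i x := by
  induction hs using Finset.Nonempty.cons_induction with
  | singleton a => simp only [Finset.inf'_singleton]; exact hf a
  | cons a s ha hs ih =>
    have heq : (fun x => (Finset.cons a s ha).inf' (Finset.cons_nonempty ha) fun i => f i x)
        = fun x => f a x ⊓ s.inf' hs fun i => f i x := by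
      funext x
      exact Finset.inf'_cons hs (fun i => f i x)
    rw [heq]
    exact (hf a).inf ih

lemma continuous_g (L : Finset (ℝ × ℝ)) (k : ℕ) : Continuous (g L k) := by
  unfold g
  by_cases h : (L.powersetCard (k + 1)).Nonempty
  · simp only [dif_pos h]
    apply continuous_sup'
    intro S
    apply continuous_inf'
    intro l
    exact evalLine_cont l
  · simp only [dif_neg h]
    exact continuous_const

lemma eq_at_closure {f h : ℝ → ℝ} (hf : Continuous f) (hh : Continuous h) {a b c : ℝ}
    (hab : a < b) (hc : c ∈ Set.Icc a b) (heq : ∀ x ∈ Set.Ioo a b, f x = h x) :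
    f c = h c := by
  have := Set.EqOn.closure (s := Set.Ioo a b) heq hf hh
  apply this
  rw [closure_Ioo hab.ne]
  exact hc

lemma exists_line_of_no_crossing {L : Finset (ℝ × ℝ)} {k : ℕ} (hk : k + 1 ≤ L.card)
    {a b : ℝ} (hab : a < b) (hX : ∀ x ∈ Set.Ioo a b, x ∉ Xc L) :
    ∃ l ∈ L, ∀ x ∈ Set.Ioo a b, g L k x = evalLine l x := by
  set x₀ := (a + b) / 2 with hx₀def
  have hx₀ : x₀ ∈ Set.Ioo a b := ⟨by rw [hx₀def]; linarith, by rw [hx₀def]; linarith⟩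
  obtain ⟨l₀, hl₀L, hl₀⟩ := exists_line_g (x := x₀) hk
  refine ⟨l₀, hl₀L, ?_⟩
  intro x hx
  have hGT : L.filter (fun l => evalLine l₀ x < evalLine l x)
      = L.filter (fun l => evalLine l₀ x₀ < evalLine l x₀) := by
    apply filter_congr
    intro l hl
    by_cases hll : l = l₀
    · subst hll; simp
    · exact eval_lt_iff_of_no_crossing hX hl hl₀L hll hx hx₀
  have hGE : L.filter (fun l => evalLine l₀ x ≤ evalLine l x)
      = L.filter (fun l => evalLine l₀ x₀ ≤ evalLine l x₀) := by
    apply filter_congr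
    intro l hl
    by_cases hll : l = l₀
    · subst hll; simp
    · have := eval_lt_iff_of_no_crossing hX hl₀L hl (fun h => hll h.symm) hx hx₀
      constructor <;> intro hh
      · exact not_lt.mp (fun hcon => (not_lt.mpr hh) (this.mpr hcon))
      · exact not_lt.mp (fun hcon => (not_lt.mpr hh) (this.mp hcon))
  apply le_antisymm
  · apply g_le hk
    rw [hGT, hl₀]
    exact card_gt_g hk
  · apply le_g
    rw [hGE, hl₀]
    exact card_ge_g hk

lemma exists_line_level {L : Finset (ℝ × ℝ)} {k : ℕ} (hk : k + 1 ≤ L.card) :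
    ∀ N : ℕ, ∀ a b : ℝ, a < b → ((Xc L).filter (fun t => t ∈ Set.Ioo a b)).card ≤ N →
    (∀ w ∈ VertF L, OnLevel L k w → w.1 ∉ Set.Ioo a b) →
    ∃ l ∈ L, ∀ x ∈ Set.Ioo a b, g L k x = evalLine l x := by
  intro N
  induction N with
  | zero =>
    intro a b hab hcard _
    apply exists_line_of_no_crossing hk hab
    intro x hx hxc
    have hmem : x ∈ (Xc L).filter (fun t => t ∈ Set.Ioo a b) := mem_filter.mpr ⟨hxc, hx⟩
    have := Finset.card_pos.mpr ⟨x, hmem⟩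
    omega
  | succ N ih =>
    intro a b hab hcard hv
    by_cases hemp : ((Xc L).filter (fun t => t ∈ Set.Ioo a b)) = ∅
    · apply exists_line_of_no_crossing hk hab
      intro x hx hxc
      have hmem : x ∈ (Xc L).filter (fun t => t ∈ Set.Ioo a b) := mem_filter.mpr ⟨hxc, hx⟩
      rw [hemp] at hmem
      exact absurd hmem (Finset.notMem_empty x)
    · obtain ⟨c, hc⟩ := Finset.nonempty_of_ne_empty hemp
      obtain ⟨hcX, hac, hcb⟩ : c ∈ Xc L ∧ a < c ∧ c < b := by
        have := mem_filter.mp hc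
        exact ⟨this.1, this.2.1, this.2.2⟩
      have hcards : ∀ u v : ℝ, u < v → Set.Ioo u v ⊆ Set.Ioo a b → c ∉ Set.Ioo u v →
          ((Xc L).filter (fun t => t ∈ Set.Ioo u v)).card ≤ N := by
        intro u v huv hsub hcuv
        have hss : (Xc L).filter (fun t => t ∈ Set.Ioo u v) ⊆
            ((Xc L).filter (fun t => t ∈ Set.Ioo a b)).erase c := by
          intro t ht
          obtain ⟨htX, htm⟩ := mem_filter.mp ht
          refine Finset.mem_erase.mpr ⟨?_, mem_filter.mpr ⟨htX, hsub htm⟩⟩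
          intro h; subst h; exact hcuv htm
        have h1 := card_le_card hss
        have h2 := Finset.card_erase_of_mem hc
        omega
      obtain ⟨l₁, hl₁L, hl₁⟩ := ih a c hac
        (hcards a c hac (fun t ht => ⟨ht.1, ht.2.trans hcb⟩) (fun h => lt_irrefl c h.2)) 
        (fun w hw hOn hmem => hv w hw hOn ⟨hmem.1, hmem.2.trans hcb⟩)
      obtain ⟨l₂, hl₂L, hl₂⟩ := ih c b hcb
        (hcards c b hcb (fun t ht => ⟨hac.trans ht.1, ht.2⟩) (fun h => lt_irrefl c h.1))
        (fun w hw hOn hmem => hv w hw hOn ⟨hac.trans hmem.1, hmem.2⟩)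
      have hb₁ : g L k c = evalLine l₁ c :=
        eq_at_closure (continuous_g L k) (evalLine_cont l₁) hac ⟨hac.le, le_refl c⟩ hl₁
      have hb₂ : g L k c = evalLine l₂ c :=
        eq_at_closure (continuous_g L k) (evalLine_cont l₂) hcb ⟨le_refl c, hcb.le⟩ hl₂
      have hl12 : l₁ = l₂ := by
        by_contra hne
        have htc : 2 ≤ throughCount L (c, g L k c) := by
          have hsub : ({l₁, l₂} : Finset (ℝ × ℝ)) ⊆
              L.filter (fun l => OnLine l (c, g L k c)) := by
            intro l hl
            rcases Finset.mem_insert.mp hl with h | h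
            · subst h; exact mem_filter.mpr ⟨hl₁L, hb₁.symm⟩
            · rw [Finset.mem_singleton.mp h]; exact mem_filter.mpr ⟨hl₂L, hb₂.symm⟩
          calc 2 = ({l₁, l₂} : Finset (ℝ × ℝ)).card := (Finset.card_pair hne).symm
            _ ≤ _ := card_le_card hsub
        exact hv _ (mem_VertF.mpr htc) rfl ⟨hac, hcb⟩
      subst hl12
      refine ⟨l₁, hl₁L, ?_⟩
      intro x hx
      rcases lt_trichotomy x c with h | h | h
      · exact hl₁ x ⟨hx.1, h⟩
      · subst h; exact hb₁
      · exact hl₂ x ⟨h, hx.2⟩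

lemma exists_line_level' {L : Finset (ℝ × ℝ)} {k : ℕ} (hk : k + 1 ≤ L.card)
    {a b : ℝ} (hab : a < b)
    (hv : ∀ w ∈ VertF L, OnLevel L k w → w.1 ∉ Set.Ioo a b) :
    ∃ l ∈ L, ∀ x ∈ Set.Ioo a b, g L k x = evalLine l x :=
  exists_line_level hk _ a b hab le_rfl hv

lemma between_count :
    ∀ N : ℕ, ∀ A B : Finset ℝ, A.card = N → A ⊆ B →
    (∀ a₁ ∈ A, ∀ a₂ ∈ A, a₁ < a₂ → (∀ a ∈ A, ¬(a₁ < a ∧ a < a₂)) →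
      ∃ b ∈ B, a₁ < b ∧ b < a₂) →
    2 * A.card ≤ B.card + 1 := by
  intro N
  induction N with
  | zero => intro A B hA _ _; rw [hA]; omega
  | succ N ih =>
    intro A B hA hAB hbet
    have hAne : A.Nonempty := Finset.card_pos.mp (by omega)
    set amax := A.max' hAne with hamax
    by_cases hN : N = 0
    · have hB : 1 ≤ B.card := Finset.card_pos.mpr ⟨amax, hAB (A.max'_mem hAne)⟩
      rw [hA]
      omega
    · set A' := A.erase amax with hA'def
      have hA' : A'.card = N := by
        rw [hA'def, Finset.card_erase_of_mem (A.max'_mem hAne), hA]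
        omega
      have hA'ne : A'.Nonempty := Finset.card_pos.mp (by omega)
      set a' := A'.max' hA'ne with ha'
      have ha'A : a' ∈ A := Finset.mem_of_mem_erase (A'.max'_mem hA'ne)
      have ha'lt : a' < amax :=
        lt_of_le_of_ne (A.le_max' a' ha'A) (Finset.ne_of_mem_erase (A'.max'_mem hA'ne))
      obtain ⟨bst, hbstB, hbst1, hbst2⟩ := hbet a' ha'A amax (A.max'_mem hAne) ha'lt
        (by
          intro a haA ⟨h1, h2⟩
          have haA' : a ∈ A' := Finset.mem_erase.mpr ⟨ne_of_lt h2, haA⟩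
          exact absurd (A'.le_max' a haA') (not_le.mpr h1))
      set B' := B.filter (· ≤ a') with hB'
      have hIH : 2 * A'.card ≤ B'.card + 1 := by
        apply ih A' B' hA'
        · intro a haA'
          exact mem_filter.mpr ⟨hAB (Finset.mem_of_mem_erase haA'), A'.le_max' a haA'⟩
        · intro a₁ h₁ a₂ h₂ h12 hno
          obtain ⟨b, hbB, hb1, hb2⟩ := hbet a₁ (Finset.mem_of_mem_erase h₁)
            a₂ (Finset.mem_of_mem_erase h₂) h12
            (by
              intro a haA ⟨hh1, hh2⟩
              have : a ∈ A' := Finset.mem_erase.mpr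
                ⟨ne_of_lt (lt_of_lt_of_le hh2 ((A'.le_max' a₂ h₂).trans ha'lt.le)), haA⟩
              exact hno a this ⟨hh1, hh2⟩)
          exact ⟨b, mem_filter.mpr ⟨hbB, (le_of_lt hb2).trans (A'.le_max' a₂ h₂)⟩, hb1, hb2⟩
      have hbstB' : bst ∉ B' := fun h => absurd ((mem_filter.mp h).2) (not_le.mpr hbst1)
      have hamaxB' : amax ∉ insert bst B' := by
        intro h
        rcases Finset.mem_insert.mp h with h | h
        · exact absurd h (ne_of_gt hbst2)
        · exact absurd ((mem_filter.mp h).2) (not_le.mpr ha'lt)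
      have hsub2 : insert amax (insert bst B') ⊆ B := by
        intro t ht
        rcases Finset.mem_insert.mp ht with h | h
        · subst h; exact hAB (A.max'_mem hAne)
        rcases Finset.mem_insert.mp h with h | h
        · subst h; exact hbstB
        · exact (mem_filter.mp h).1
      have hcard2 : B'.card + 2 ≤ B.card := by
        have h1 := card_le_card hsub2
        rw [Finset.card_insert_of_notMem hamaxB', Finset.card_insert_of_notMem hbstB'] at h1
        omega
      rw [hA]
      omega

set_option maxHeartbeats 1000000 in
lemma doubling {L : Finset (ℝ × ℝ)} {k : ℕ} (hk2 : k + 2 ≤ L.card)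
    (hyp : ∀ w ∈ VertF L, k + 2 ≤ upperCount L w + throughCount L w) :
    2 * ((VertF L).filter (OnLevel L k)).card
      ≤ ((VertF L).filter (OnLevel L (k + 1))).card + 1 := by
  have hk1 : k + 1 ≤ L.card := by omega
  set S := (VertF L).filter (OnLevel L k) with hS
  set T := (VertF L).filter (OnLevel L (k + 1)) with hT
  have hST : S ⊆ T := by
    intro w hw
    obtain ⟨hwV, hwOn⟩ := mem_filter.mp hw
    refine mem_filter.mpr ⟨hwV, ?_⟩
    obtain ⟨hu, _⟩ := (onLevel_iff hk1).mp hwOn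
    exact (onLevel_iff (p := w) (by omega : (k + 1) + 1 ≤ L.card)).mpr
      ⟨by omega, hyp w hwV⟩
  have hinjT : ∀ p ∈ T, ∀ q ∈ T, p.1 = q.1 → p = q := by
    intro p hp q hq hpq
    have h1 : g L (k + 1) p.1 = p.2 := (mem_filter.mp hp).2
    have h2 : g L (k + 1) q.1 = q.2 := (mem_filter.mp hq).2
    exact Prod.ext hpq (by rw [← h1, ← h2, hpq])
  set A := S.image Prod.fst with hA
  set B := T.image Prod.fst with hB
  have hAcard : A.card = S.card :=
    Finset.card_image_of_injOn (fun p hp q hq h => hinjT p (hST hp) q (hST hq) h)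
  have hBcard : B.card = T.card :=
    Finset.card_image_of_injOn (fun p hp q hq h => hinjT p hp q hq h)
  have hAB : A ⊆ B := Finset.image_subset_image hST
  have hbet : ∀ a₁ ∈ A, ∀ a₂ ∈ A, a₁ < a₂ → (∀ a ∈ A, ¬(a₁ < a ∧ a < a₂)) →
      ∃ b ∈ B, a₁ < b ∧ b < a₂ := by
    intro a₁ ha₁ a₂ ha₂ h12 hno
    obtain ⟨p₁, hp₁S, hp₁⟩ := mem_image.mp ha₁
    obtain ⟨p₂, hp₂S, hp₂⟩ := mem_image.mp ha₂
    have hnok : ∀ w ∈ VertF L, OnLevel L k w → w.1 ∉ Set.Ioo a₁ a₂ := by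
      intro w hw hOn hmem
      exact hno w.1 (Finset.mem_image_of_mem _ (mem_filter.mpr ⟨hw, hOn⟩)) ⟨hmem.1, hmem.2⟩
    obtain ⟨ls, hlsL, hls⟩ := exists_line_level' hk1 h12 hnok
    set xm := (a₁ + a₂) / 2 with hxm
    have hxmm : xm ∈ Set.Ioo a₁ a₂ := ⟨by rw [hxm]; linarith, by rw [hxm]; linarith⟩
    by_cases hcase : g L (k + 1) xm = g L k xm
    · refine ⟨xm, ?_, hxmm.1, hxmm.2⟩
      have h1 : k + 2 ≤ (L.filter fun l => g L (k + 1) xm ≤ evalLine l xm).card :=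
        card_ge_g hk2
      have h2 : (L.filter fun l => g L (k + 1) xm < evalLine l xm).card ≤ k := by
        rw [hcase]; exact card_gt_g hk1
      have h3 := up_add_through L (xm, g L (k + 1) xm)
      have h4 := upperCount_def L (xm, g L (k + 1) xm)
      have htc : 2 ≤ throughCount L (xm, g L (k + 1) xm) := by
        simp only at h3 h4
        omega
      exact Finset.mem_image_of_mem _
        (mem_filter.mpr ⟨mem_VertF.mpr htc, (rfl : OnLevel L (k + 1) (xm, g L (k + 1) xm))⟩)
    · by_cases hnoB : ∃ q ∈ T, q.1 ∈ Set.Ioo a₁ a₂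
      · obtain ⟨q, hqT, hqm⟩ := hnoB
        exact ⟨q.1, Finset.mem_image_of_mem Prod.fst hqT, hqm.1, hqm.2⟩
      · exfalso
        apply hcase
        clear hcase
        push_neg at hnoB
        have hnok1 : ∀ w ∈ VertF L, OnLevel L (k + 1) w → w.1 ∉ Set.Ioo a₁ a₂ := by
          intro w hw hOn
          exact hnoB w (mem_filter.mpr ⟨hw, hOn⟩)
        obtain ⟨lt', hlt'L, hlt'⟩ := exists_line_level' (by omega : (k + 1) + 1 ≤ L.card) h12 hnok1
        have hc1 : g L (k + 1) a₁ = evalLine lt' a₁ :=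
          eq_at_closure (continuous_g L (k + 1)) (evalLine_cont lt') h12 ⟨le_refl a₁, h12.le⟩ hlt'
        have hc2 : g L k a₁ = evalLine ls a₁ :=
          eq_at_closure (continuous_g L k) (evalLine_cont ls) h12 ⟨le_refl a₁, h12.le⟩ hls
        have hc3 : g L (k + 1) a₂ = evalLine lt' a₂ :=
          eq_at_closure (continuous_g L (k + 1)) (evalLine_cont lt') h12 ⟨h12.le, le_refl a₂⟩ hlt'
        have hc4 : g L k a₂ = evalLine ls a₂ :=
          eq_at_closure (continuous_g L k) (evalLine_cont ls) h12 ⟨h12.le, le_refl a₂⟩ hls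
        have hT₁ : OnLevel L (k + 1) p₁ := (mem_filter.mp (hST hp₁S)).2
        have hK₁ : OnLevel L k p₁ := (mem_filter.mp hp₁S).2
        have hT₂ : OnLevel L (k + 1) p₂ := (mem_filter.mp (hST hp₂S)).2
        have hK₂ : OnLevel L k p₂ := (mem_filter.mp hp₂S).2
        rw [OnLevel, hp₁] at hT₁ hK₁
        rw [OnLevel, hp₂] at hT₂ hK₂
        have e₁ : evalLine lt' a₁ = evalLine ls a₁ := by rw [← hc1, ← hc2, hT₁, hK₁]
        have e₂ : evalLine lt' a₂ = evalLine ls a₂ := by rw [← hc3, ← hc4, hT₂, hK₂]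
        have := line_eq_of_eval_eq (ne_of_lt h12) e₁ e₂ xm
        rw [hlt' xm hxmm, hls xm hxmm, this]
  have hfinal := between_count A.card A B rfl hAB hbet
  rw [hAcard, hBcard] at hfinal
  exact hfinal

lemma growth (L : Finset (ℝ × ℝ)) (hL : L.Nonempty)
    (henv : ∃ p q : ℝ × ℝ, p ≠ q ∧ EnvelopeVertex L hL p ∧ EnvelopeVertex L hL q) :
    ∀ j : ℕ, j + 1 ≤ L.card →
    (∀ w ∈ VertF L, j + 1 ≤ upperCount L w + throughCount L w) →
    2 ^ j + 1 ≤ ((VertF L).filter (OnLevel L j)).card := by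
  intro j
  induction j with
  | zero =>
    intro hk _
    obtain ⟨p, q, hpq, ⟨hpe, hpt⟩, ⟨hqe, hqt⟩⟩ := henv
    have hmem : ∀ r : ℝ × ℝ, r.2 = envVal L hL r.1 → 2 ≤ throughCount L r →
        r ∈ (VertF L).filter (OnLevel L 0) := by
      intro r hre hrt
      refine mem_filter.mpr ⟨mem_VertF.mpr hrt, ?_⟩
      rw [OnLevel, g_zero hL, ← hre]
    have hsub : ({p, q} : Finset (ℝ × ℝ)) ⊆ (VertF L).filter (OnLevel L 0) := by
      intro r hr
      rcases Finset.mem_insert.mp hr with h | h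
      · subst h; exact hmem r hpe hpt
      · rw [Finset.mem_singleton.mp h]; exact hmem q hqe hqt
    calc 2 ^ 0 + 1 = ({p, q} : Finset (ℝ × ℝ)).card := by rw [Finset.card_pair hpq]; norm_num
      _ ≤ _ := card_le_card hsub

  | succ j ih =>
    intro hk hyp
    have h1 : 2 ^ j + 1 ≤ ((VertF L).filter (OnLevel L j)).card :=
      ih (by omega) (fun w hw => by have := hyp w hw; omega)
    have h2 := doubling (k := j) hk hyp
    have h3 : 2 ^ (j + 1) = 2 * 2 ^ j := by ring
    omega


theorem stmt6 (L : Finset (ℝ × ℝ)) (n : ℕ) (hn : L.card = n) (hn2 : 2 ≤ n)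
    (hL : L.Nonempty)
    (henv : ∃ p q : ℝ × ℝ, p ≠ q ∧ EnvelopeVertex L hL p ∧ EnvelopeVertex L hL q)
    (v : ℝ × ℝ) (hv : 2 ≤ throughCount L v)
    (hmax : ∀ w : ℝ × ℝ, 2 ≤ throughCount L w → levelCount L w ≤ levelCount L v) :
    (upperCount L v : ℝ) ≤ 2 * Real.logb 2 n := by
  classical
  have hvV : v ∈ VertF L := mem_VertF.mpr hv
  have hyp : ∀ w ∈ VertF L, (upperCount L v + 1) + 1 ≤ upperCount L w + throughCount L w := by
    intro w hw
    have h1 := hmax w (mem_VertF.mp hw)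
    have h2 := count_partition L w
    have h3 := count_partition L v
    omega
  have hcard : (upperCount L v + 1) + 1 ≤ L.card := by
    have h1 := hyp v hvV
    have h2 := count_partition L v
    omega
  have hg := growth L hL henv (upperCount L v + 1) hcard hyp
  have hVcard : (VertF L).card ≤ L.card * L.card := by
    unfold VertF
    calc ((L.offDiag.filter fun pq => pq.1.1 ≠ pq.2.1).image fun pq => ip pq.1 pq.2).card
        ≤ (L.offDiag.filter fun pq => pq.1.1 ≠ pq.2.1).card := Finset.card_image_le
      _ ≤ L.offDiag.card := Finset.card_filter_le _ _
      _ = L.card * L.card - L.card := Finset.offDiag_card L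
      _ ≤ L.card * L.card := Nat.sub_le _ _
  set u := upperCount L v with hu
  have hpow : 2 ^ (u + 1) ≤ n * n := by
    have hfs := card_le_card (filter_subset (OnLevel L (u + 1)) (VertF L))
    rw [hn] at hVcard
    omega
  have h2u : ((2 : ℝ)) ^ (u + 1) ≤ (n : ℝ) ^ 2 := by
    have h : (2 : ℕ) ^ (u + 1) ≤ n ^ 2 := by
      have hnn : n * n = n ^ 2 := (sq n).symm
      omega
    calc ((2 : ℝ)) ^ (u + 1) = ((2 ^ (u + 1) : ℕ) : ℝ) := by push_cast; ring
      _ ≤ ((n ^ 2 : ℕ) : ℝ) := Nat.cast_le.mpr h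
      _ = (n : ℝ) ^ 2 := by push_cast; ring
  have hb : (1 : ℝ) < 2 := one_lt_two
  have hlog : ((u : ℝ) + 1) ≤ 2 * Real.logb 2 n := by
    calc (u : ℝ) + 1 = ((u + 1 : ℕ) : ℝ) * Real.logb 2 2 := by
          rw [Real.logb_self_eq_one hb]; push_cast; ring
      _ = Real.logb 2 ((2 : ℝ) ^ (u + 1)) := (Real.logb_pow 2 2 (u + 1)).symm
      _ ≤ Real.logb 2 ((n : ℝ) ^ 2) := Real.logb_le_logb_of_le hb (by positivity) h2u
      _ = 2 * Real.logb 2 (n : ℝ) := by rw [Real.logb_pow]; norm_num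
  linarith
end
end

section
/- Let L be a set of n distinct non-vertical lines whose upper envelope has at least two vertices (contains a bounded edge). Then there exists k₀ ≤ 2·log₂ n such that some vertex of the arrangement of L lies strictly above the k₀-upper level, and the maximum level of any vertex of the arrangement equals n − k₀. -/
open Finset
open scoped Classical

noncomputable section

-- ### basic counting
lemma filter_ge_split (L : Finset (ℝ × ℝ)) (p : ℝ × ℝ) :
    (L.filter (fun l => p.2 ≤ evalLine l p.1)).card
      = upperCount L p + throughCount L p := by
  rw [upperCount, throughCount, ← Finset.card_union_of_disjoint]
  · congr 1
    ext l
    rw [Finset.mem_union, Finset.mem_filter, Finset.mem_filter, Finset.mem_filter]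
    simp only [Above, OnLine]
    constructor
    · rintro ⟨hl, h⟩
      rcases lt_or_eq_of_le h with h' | h'
      · exact Or.inl ⟨hl, h'⟩
      · exact Or.inr ⟨hl, h'.symm⟩
    · rintro (⟨hl, h⟩ | ⟨hl, h⟩)
      · exact ⟨hl, le_of_lt h⟩
      · exact ⟨hl, le_of_eq h.symm⟩
  · rw [Finset.disjoint_filter]
    intro l _ h1 h2
    rw [Above] at h1; rw [OnLine] at h2
    linarith

lemma partition_count (L : Finset (ℝ × ℝ)) (p : ℝ × ℝ) :
    upperCount L p + throughCount L p + levelCount L p = L.card := by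
  rw [← filter_ge_split, levelCount]
  rw [← Finset.card_filter_add_card_filter_not (s := L)
    (p := fun l => p.2 ≤ evalLine l p.1)]
  congr 1
  apply congrArg
  apply Finset.filter_congr
  intro l _
  simp [Below, not_le]

lemma ut_le_card (L : Finset (ℝ × ℝ)) (p : ℝ × ℝ) :
    upperCount L p + throughCount L p ≤ L.card := by
  have := partition_count L p; omega

-- if w is vertically below v, all lines through or above v are strictly above w
lemma vert_above (L : Finset (ℝ × ℝ)) (v w : ℝ × ℝ) (hx : v.1 = w.1) (hy : w.2 < v.2) :
    upperCount L v + throughCount L v ≤ upperCount L w := by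
  rw [← filter_ge_split, upperCount]
  apply Finset.card_le_card
  intro l hl
  rw [Finset.mem_filter] at hl ⊢
  refine ⟨hl.1, ?_⟩
  rw [Above, ← hx]
  exact lt_of_lt_of_le hy hl.2

lemma env_upper_zero (L : Finset (ℝ × ℝ)) (hL : L.Nonempty) (p : ℝ × ℝ)
    (hp : EnvelopeVertex L hL p) : upperCount L p = 0 := by
  rw [upperCount, Finset.card_eq_zero, Finset.filter_eq_empty_iff]
  intro l hl
  rw [Above, not_lt, hp.1, envVal]
  exact Finset.le_sup' (fun l => evalLine l p.1) hl

-- ### the k-level function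
def aboveCard (L : Finset (ℝ × ℝ)) (x y : ℝ) : ℕ :=
  (L.filter (fun l => y < evalLine l x)).card

def fLev (L : Finset (ℝ × ℝ)) (k : ℕ) (x : ℝ) : ℝ :=
  sInf {y : ℝ | aboveCard L x y ≤ k}

section fLevFacts
variable {L : Finset (ℝ × ℝ)} {k : ℕ} {x : ℝ}

lemma fLev_set_nonempty (hL : L.Nonempty) :
    {y : ℝ | aboveCard L x y ≤ k}.Nonempty := by
  refine ⟨envVal L hL x, ?_⟩
  simp only [Set.mem_setOf_eq, aboveCard]
  have : L.filter (fun l => envVal L hL x < evalLine l x) = ∅ := by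
    rw [Finset.filter_eq_empty_iff]
    intro l hl
    rw [not_lt, envVal]
    exact Finset.le_sup' (fun l => evalLine l x) hl
  rw [this]; simp

lemma fLev_set_bddBelow (hL : L.Nonempty) (hk : k < L.card) :
    BddBelow {y : ℝ | aboveCard L x y ≤ k} := by
  refine ⟨L.inf' hL (fun l => evalLine l x), ?_⟩
  intro y hy
  by_contra hlt
  push_neg at hlt
  have : L.filter (fun l => y < evalLine l x) = L := by
    rw [Finset.filter_eq_self]
    intro l hl
    exact lt_of_lt_of_le hlt (Finset.inf'_le (fun l => evalLine l x) hl)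
  simp only [Set.mem_setOf_eq, aboveCard, this] at hy
  omega

/-- F3 -/
lemma fLev_le (hL : L.Nonempty) (hk : k < L.card) {c : ℝ}
    (hc : aboveCard L x c ≤ k) : fLev L k x ≤ c :=
  csInf_le (fLev_set_bddBelow hL hk) hc

/-- F4 -/
lemma le_fLev (hL : L.Nonempty) {c : ℝ}
    (hc : k + 1 ≤ (L.filter (fun l => c ≤ evalLine l x)).card) : c ≤ fLev L k x := by
  apply le_csInf (fLev_set_nonempty hL)
  intro y hy
  by_contra hlt
  push_neg at hlt
  have hsub : L.filter (fun l => c ≤ evalLine l x) ⊆ L.filter (fun l => y < evalLine l x) := by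
    intro l hl
    rw [Finset.mem_filter] at hl ⊢
    exact ⟨hl.1, lt_of_lt_of_le hlt hl.2⟩
  have := Finset.card_le_card hsub
  simp only [Set.mem_setOf_eq, aboveCard] at hy
  omega

/-- F1 -/
lemma fLev_above_le (hL : L.Nonempty) (hk : k < L.card) :
    aboveCard L x (fLev L k x) ≤ k := by
  set A := L.filter (fun l => fLev L k x < evalLine l x) with hA
  rcases A.eq_empty_or_nonempty with h | h
  · simp [aboveCard, ← hA, h]
  · set c := (A.image (fun l => evalLine l x)).min' (h.image _) with hc
    have hcA : c ∈ A.image (fun l => evalLine l x) := Finset.min'_mem _ _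
    rw [Finset.mem_image] at hcA
    obtain ⟨l₀, hl₀A, hl₀⟩ := hcA
    have hfc : fLev L k x < c := by
      rw [← hl₀]
      exact (Finset.mem_filter.1 hl₀A).2
    obtain ⟨y, hy, hyc⟩ : ∃ y ∈ {y : ℝ | aboveCard L x y ≤ k}, y < c := by
      by_contra hcon
      push_neg at hcon
      have : c ≤ fLev L k x := le_csInf (fLev_set_nonempty hL) hcon
      linarith
    have hsub : A ⊆ L.filter (fun l => y < evalLine l x) := by
      intro l hl
      rw [Finset.mem_filter] at hl ⊢
      refine ⟨hl.1, lt_of_lt_of_le hyc ?_⟩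
      have hlA : l ∈ A := Finset.mem_filter.2 hl
      exact Finset.min'_le _ _ (Finset.mem_image_of_mem _ hlA)
    calc aboveCard L x (fLev L k x) = A.card := rfl
      _ ≤ _ := Finset.card_le_card hsub
      _ ≤ k := hy

/-- F2 -/
lemma fLev_ge_card (hL : L.Nonempty) (hk : k < L.card) :
    k + 1 ≤ (L.filter (fun l => fLev L k x ≤ evalLine l x)).card := by
  by_contra hcon
  push_neg at hcon
  set C := L.filter (fun l => evalLine l x < fLev L k x) with hC
  set y := if h : C.Nonempty then (C.image (fun l => evalLine l x)).max' (h.image _)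
    else fLev L k x - 1 with hy
  have hyf : y < fLev L k x := by
    rw [hy]
    split
    · rename_i h
      rcases Finset.mem_image.1 (Finset.max'_mem (C.image (fun l => evalLine l x)) (h.image _))
        with ⟨l₀, hl₀, hl₀e⟩
      rw [← hl₀e]
      exact (Finset.mem_filter.1 hl₀).2
    · linarith
  have hymem : aboveCard L x y ≤ k := by
    have hsub : L.filter (fun l => y < evalLine l x)
        ⊆ L.filter (fun l => fLev L k x ≤ evalLine l x) := by
      intro l hl
      rw [Finset.mem_filter] at hl ⊢
      refine ⟨hl.1, ?_⟩
      by_contra hgt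
      push_neg at hgt
      have hlC : l ∈ C := Finset.mem_filter.2 ⟨hl.1, hgt⟩
      have : evalLine l x ≤ y := by
        rw [hy]
        split
        · exact Finset.le_max' _ _ (Finset.mem_image_of_mem (fun l => evalLine l x) hlC)
        · rename_i hcn
          exact absurd ⟨l, hlC⟩ hcn
      exact absurd hl.2 (not_lt.2 this)
    have h4 := Finset.card_le_card hsub
    simp only [aboveCard]
    omega
  have := fLev_le hL hk hymem
  linarith

lemma fLev_upper_le (hL : L.Nonempty) (hk : k < L.card) :
    upperCount L (x, fLev L k x) ≤ k := fLev_above_le hL hk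

lemma fLev_through_ge (hL : L.Nonempty) (hk : k < L.card) :
    1 ≤ throughCount L (x, fLev L k x) := by
  have h1 := fLev_above_le hL hk (x := x)
  have h2 := fLev_ge_card hL hk (x := x)
  have h3 := filter_ge_split L (x, fLev L k x)
  simp only [upperCount, throughCount] at h3 ⊢
  have : (L.filter (fun l => (x, fLev L k x).2 ≤ evalLine l (x, fLev L k x).1)).card
      = (L.filter (fun l => fLev L k x ≤ evalLine l x)).card := rfl
  rw [this] at h3
  have : aboveCard L x (fLev L k x)
      = (L.filter (fun l => Above l (x, fLev L k x))).card := rfl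
  omega

/-- level passes through any vertex-like point with the right counts -/
lemma fLev_eq_of_point (hL : L.Nonempty) (hk : k < L.card) (v : ℝ × ℝ)
    (hu : upperCount L v ≤ k) (hut : k + 1 ≤ upperCount L v + throughCount L v) :
    fLev L k v.1 = v.2 := by
  have hle : fLev L k v.1 ≤ v.2 := by
    apply fLev_le hL hk
    exact hu
  have hge : v.2 ≤ fLev L k v.1 := by
    apply le_fLev hL
    rw [filter_ge_split]
    omega
  linarith

lemma eval_lip {l : ℝ × ℝ} {M x y : ℝ} (hM : |l.1| ≤ M) :
    |evalLine l x - evalLine l y| ≤ M * |x - y| := by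
  have : evalLine l x - evalLine l y = l.1 * (x - y) := by
    simp [evalLine]; ring
  rw [this, abs_mul]
  apply mul_le_mul_of_nonneg_right hM (abs_nonneg _)

lemma fLev_lip (L : Finset (ℝ × ℝ)) (hL : L.Nonempty) (k : ℕ) (hk : k < L.card)
    (M : ℝ) (hM : ∀ l ∈ L, |l.1| ≤ M) (x y : ℝ) :
    |fLev L k x - fLev L k y| ≤ M * |x - y| := by
  have key : ∀ a b : ℝ, fLev L k a - fLev L k b ≤ M * |a - b| := by
    intro a b
    have h1 : fLev L k a - M * |a - b| ≤ fLev L k b := by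
      apply le_fLev hL
      have hsub : L.filter (fun l => fLev L k a ≤ evalLine l a)
          ⊆ L.filter (fun l => fLev L k a - M * |a - b| ≤ evalLine l b) := by
        intro l hl
        rw [Finset.mem_filter] at hl ⊢
        refine ⟨hl.1, ?_⟩
        have := eval_lip (hM l hl.1) (x := a) (y := b)
        have h2 := abs_le.1 this
        linarith [hl.2, h2.1, h2.2]
      exact le_trans (fLev_ge_card hL hk) (Finset.card_le_card hsub)
    linarith
  have h1 := key x y
  have h2 := key y x
  rw [abs_sub_comm y x] at h2
  rw [abs_le]
  constructor <;> linarith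

/-- local constancy of the level where only one line passes through it -/
lemma fLev_local (L : Finset (ℝ × ℝ)) (hL : L.Nonempty) (k : ℕ) (hk : k < L.card)
    (x₀ : ℝ) (l : ℝ × ℝ) (hl : l ∈ L) (hon : evalLine l x₀ = fLev L k x₀)
    (ht : throughCount L (x₀, fLev L k x₀) ≤ 1) :
    ∃ δ > 0, ∀ z, |z - x₀| < δ → fLev L k z = evalLine l z := by
  classical
  set f := fLev L k x₀ with hf
  set A := L.filter (fun m => f < evalLine m x₀) with hA
  set C := L.filter (fun m => evalLine m x₀ < f) with hCdef
  -- the on-set is {l}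
  have hOn : L.filter (fun m => evalLine m x₀ = f) = {l} := by
    apply Finset.eq_singleton_iff_unique_mem.2
    constructor
    · exact Finset.mem_filter.2 ⟨hl, hon⟩
    · intro m hm
      by_contra hne
      have h2 : 2 ≤ (L.filter (fun m => evalLine m x₀ = f)).card := by
        apply Finset.one_lt_card.2
        exact ⟨m, hm, l, Finset.mem_filter.2 ⟨hl, hon⟩, hne⟩
      have : (L.filter (fun m => evalLine m x₀ = f)).card ≤ 1 := by
        have heq : L.filter (fun m => OnLine m (x₀, f)) =
            L.filter (fun m => evalLine m x₀ = f) := rfl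
        calc _ = throughCount L (x₀, f) := by rw [throughCount, heq]
          _ ≤ 1 := ht
      omega
  have hLsplit : ∀ m ∈ L, m ∈ A ∨ m ∈ C ∨ m = l := by
    intro m hm
    rcases lt_trichotomy (evalLine m x₀) f with h | h | h
    · exact Or.inr (Or.inl (Finset.mem_filter.2 ⟨hm, h⟩))
    · right; right
      have : m ∈ L.filter (fun m => evalLine m x₀ = f) := Finset.mem_filter.2 ⟨hm, h⟩
      rw [hOn] at this
      exact Finset.mem_singleton.1 this
    · exact Or.inl (Finset.mem_filter.2 ⟨hm, h⟩)
  have hAcard : A.card ≤ k := fLev_above_le hL hk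
  have hlA : l ∉ A := by
    intro h
    have := (Finset.mem_filter.1 h).2
    rw [hon] at this
    exact lt_irrefl _ this
  have hAcard' : k ≤ A.card := by
    have h2 := fLev_ge_card hL hk (x := x₀)
    rw [← hf] at h2
    have hsub : L.filter (fun m => f ≤ evalLine m x₀) ⊆ insert l A := by
      intro m hm
      rw [Finset.mem_filter] at hm
      rcases hLsplit m hm.1 with h | h | h
      · exact Finset.mem_insert_of_mem h
      · exfalso
        have := (Finset.mem_filter.1 h).2
        linarith [hm.2]
      · rw [h]; exact Finset.mem_insert_self _ _
    have := Finset.card_le_card hsub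
    rw [Finset.card_insert_of_notMem hlA] at this
    omega
  -- choose δ
  set g : (ℝ × ℝ) → ℝ := fun m => |evalLine m x₀ - evalLine l x₀| / (|m.1 - l.1| + 1) with hg
  set δ := if h : (A ∪ C).Nonempty then ((A ∪ C).image g).min' (h.image g) else 1 with hδ
  have hgpos : ∀ m ∈ A ∪ C, 0 < g m := by
    intro m hm
    have hne : evalLine m x₀ ≠ evalLine l x₀ := by
      rw [hon]
      rcases Finset.mem_union.1 hm with h | h
      · exact ne_of_gt (Finset.mem_filter.1 h).2
      · exact ne_of_lt (Finset.mem_filter.1 h).2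
    apply div_pos (abs_pos.2 (sub_ne_zero.2 hne))
    positivity
  have hδpos : 0 < δ := by
    rw [hδ]
    split
    · rename_i h
      obtain ⟨m, hm, hme⟩ := Finset.mem_image.1 (Finset.min'_mem ((A ∪ C).image g) (h.image g))
      rw [← hme]
      exact hgpos m hm
    · norm_num
  refine ⟨δ, hδpos, fun z hz => ?_⟩
  -- sign preservation
  have hsign : ∀ m ∈ A ∪ C, δ ≤ g m := by
    intro m hm
    rw [hδ]
    split
    · exact Finset.min'_le _ _ (Finset.mem_image_of_mem g hm)
    · rename_i h
      exact absurd ⟨m, hm⟩ h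
  have hpres : ∀ m ∈ A ∪ C,
      |(evalLine m z - evalLine l z) - (evalLine m x₀ - evalLine l x₀)| <
        |evalLine m x₀ - evalLine l x₀| := by
    intro m hm
    have h1 : evalLine m z - evalLine l z - (evalLine m x₀ - evalLine l x₀)
        = (m.1 - l.1) * (z - x₀) := by
      simp [evalLine]; ring
    rw [h1, abs_mul]
    have hgm := hgpos m hm
    have hδg := hsign m hm
    calc |m.1 - l.1| * |z - x₀| ≤ |m.1 - l.1| * g m := by
          apply mul_le_mul_of_nonneg_left (le_of_lt (lt_of_lt_of_le hz hδg)) (abs_nonneg _)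
      _ < (|m.1 - l.1| + 1) * g m := by nlinarith
      _ = |evalLine m x₀ - evalLine l x₀| := by
          rw [hg]
          field_simp
  have hAz : ∀ m ∈ A, evalLine l z < evalLine m z := by
    intro m hm
    have := hpres m (Finset.mem_union_left _ hm)
    have h0 : 0 < evalLine m x₀ - evalLine l x₀ := by
      rw [hon]
      exact sub_pos.2 (Finset.mem_filter.1 hm).2
    rw [abs_of_pos h0] at this
    have := (abs_lt.1 this).1
    linarith
  have hCz : ∀ m ∈ C, evalLine m z < evalLine l z := by
    intro m hm
    have := hpres m (Finset.mem_union_right _ hm)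
    have h0 : evalLine m x₀ - evalLine l x₀ < 0 := by
      rw [hon]
      exact sub_neg.2 (Finset.mem_filter.1 hm).2
    rw [abs_of_neg h0] at this
    have := (abs_lt.1 this).2
    linarith
  -- conclude
  have hle : fLev L k z ≤ evalLine l z := by
    apply fLev_le hL hk
    rw [aboveCard]
    have hsub : L.filter (fun m => evalLine l z < evalLine m z) ⊆ A := by
      intro m hm
      rw [Finset.mem_filter] at hm
      rcases hLsplit m hm.1 with h | h | h
      · exact h
      · exact absurd hm.2 (not_lt.2 (le_of_lt (hCz m h)))
      · rw [h] at hm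
        exact absurd hm.2 (lt_irrefl _)
    exact le_trans (Finset.card_le_card hsub) hAcard
  have hge : evalLine l z ≤ fLev L k z := by
    apply le_fLev hL
    have hsub : insert l A ⊆ L.filter (fun m => evalLine l z ≤ evalLine m z) := by
      intro m hm
      rcases Finset.mem_insert.1 hm with h | h
      · rw [h]
        exact Finset.mem_filter.2 ⟨hl, le_refl _⟩
      · exact Finset.mem_filter.2 ⟨(Finset.mem_filter.1 h).1, le_of_lt (hAz m h)⟩
    have := Finset.card_le_card hsub
    rw [Finset.card_insert_of_notMem hlA] at this
    omega
  linarith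

lemma extend_right (f : ℝ → ℝ) (M : ℝ) (hM : 0 ≤ M) (l : ℝ × ℝ)
    (hlip : ∀ x y : ℝ, |f x - f y| ≤ M * |x - y|)
    (a b x₀ : ℝ) (hax : a < x₀) (hxb : x₀ < b)
    (hloc : ∀ x, a < x → x < b → f x = evalLine l x →
      ∃ δ > 0, ∀ z, |z - x| < δ → f z = evalLine l z)
    (h0 : f x₀ = evalLine l x₀) :
    f b = evalLine l b := by
  classical
  set A := {x : ℝ | x ∈ Set.Icc x₀ b ∧ ∀ z ∈ Set.Icc x₀ x, f z = evalLine l z} with hA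
  have hx₀A : x₀ ∈ A := by
    refine ⟨⟨le_refl _, le_of_lt hxb⟩, fun z hz => ?_⟩
    have : z = x₀ := le_antisymm hz.2 hz.1
    rw [this]; exact h0
  have hAne : A.Nonempty := ⟨x₀, hx₀A⟩
  have hbdd : BddAbove A := ⟨b, fun y hy => hy.1.2⟩
  set c := sSup A with hc
  have hc1 : x₀ ≤ c := le_csSup hbdd hx₀A
  have hc2 : c ≤ b := csSup_le hAne (fun y hy => hy.1.2)
  have hbelow : ∀ z, x₀ ≤ z → z < c → f z = evalLine l z := by
    intro z hz1 hz2
    obtain ⟨a', ha'A, hza'⟩ := exists_lt_of_lt_csSup hAne hz2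
    exact ha'A.2 z ⟨hz1, le_of_lt hza'⟩
  have hfc : f c = evalLine l c := by
    have key : ∀ ε : ℝ, 0 < ε → |f c - evalLine l c| ≤ ε := by
      intro ε hε
      set K := M + |l.1| + 1 with hK
      have hKpos : 0 < K := by positivity
      set z := max x₀ (c - ε / K) with hz
      have hzc : z ≤ c := max_le hc1 (by nlinarith [div_pos hε hKpos])
      rcases eq_or_lt_of_le hzc with heq | hlt
      · -- z = c; then x₀ = c (since c - ε/K < c)
        have hx0c : x₀ = c := by
          rcases max_cases x₀ (c - ε / K) with ⟨h1, _⟩ | ⟨h1, _⟩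
          · exact h1.symm.trans (hz.symm.trans heq)
          · exfalso
            have : c - ε / K < c := by nlinarith [div_pos hε hKpos]
            rw [← hz] at h1
            rw [h1] at heq
            linarith
        rw [← hx0c, h0]
        simp [abs_nonneg, le_of_lt hε]
      · have hfz : f z = evalLine l z := hbelow z (le_max_left _ _) hlt
        have h1 : |f c - f z| ≤ M * |c - z| := hlip c z
        have h2 : |evalLine l z - evalLine l c| ≤ |l.1| * |z - c| :=
          eval_lip (le_refl _)
        have hcz : c - z ≤ ε / K := by
          have := le_max_right x₀ (c - ε / K)
          rw [← hz] at this
          linarith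
        have hczpos : (0:ℝ) ≤ c - z := by linarith
        calc |f c - evalLine l c| = |(f c - f z) + (f z - evalLine l c)| := by ring_nf
          _ ≤ |f c - f z| + |f z - evalLine l c| := abs_add_le _ _
          _ = |f c - f z| + |evalLine l z - evalLine l c| := by rw [hfz]
          _ ≤ M * |c - z| + |l.1| * |z - c| := add_le_add h1 h2
          _ = (M + |l.1|) * (c - z) := by
              rw [abs_of_nonneg hczpos, abs_sub_comm z c, abs_of_nonneg hczpos]; ring
          _ ≤ (M + |l.1|) * (ε / K) := by
              apply mul_le_mul_of_nonneg_left hcz (by positivity)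
          _ ≤ ε := by
              rw [hK] at hKpos ⊢
              rw [mul_comm, div_mul_eq_mul_div, div_le_iff₀ hKpos]
              nlinarith [abs_nonneg l.1]
    by_contra hne
    have hpos : 0 < |f c - evalLine l c| := abs_pos.2 (sub_ne_zero.2 hne)
    have := key (|f c - evalLine l c| / 2) (by linarith)
    linarith
  have hcb : c = b := by
    by_contra hne
    have hcb' : c < b := lt_of_le_of_ne hc2 hne
    obtain ⟨δ, hδpos, hδ⟩ := hloc c (lt_of_lt_of_le hax hc1) hcb' hfc
    set c' := min (c + δ / 2) b with hc'
    have hcc' : c < c' := lt_min (by linarith) hcb'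
    have hc'A : c' ∈ A := by
      refine ⟨⟨by linarith, min_le_right _ _⟩, fun z hz => ?_⟩
      rcases lt_trichotomy z c with h | h | h
      · exact hbelow z hz.1 h
      · rw [h]; exact hfc
      · apply hδ
        have : z ≤ c + δ / 2 := le_trans hz.2 (min_le_left _ _)
        rw [abs_of_pos (by linarith : (0:ℝ) < z - c)]
        linarith
    have := le_csSup hbdd hc'A
    rw [← hc] at this
    linarith
  rw [← hcb]; exact hfc

lemma extend_left (f : ℝ → ℝ) (M : ℝ) (hM : 0 ≤ M) (l : ℝ × ℝ)
    (hlip : ∀ x y : ℝ, |f x - f y| ≤ M * |x - y|)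
    (a b x₀ : ℝ) (hax : a < x₀) (hxb : x₀ < b)
    (hloc : ∀ x, a < x → x < b → f x = evalLine l x →
      ∃ δ > 0, ∀ z, |z - x| < δ → f z = evalLine l z)
    (h0 : f x₀ = evalLine l x₀) :
    f a = evalLine l a := by
  have hev : ∀ x : ℝ, evalLine (-l.1, l.2) x = evalLine l (-x) := by
    intro x; simp only [evalLine]; ring
  have := extend_right (fun x => f (-x)) M hM (-l.1, l.2)
    (fun x y => by
      have := hlip (-x) (-y)
      have h2 : |(-x) - (-y)| = |x - y| := by rw [← abs_neg]; ring_nf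
      rw [h2] at this
      exact this)
    (-b) (-a) (-x₀) (by linarith) (by linarith)
    (fun x hx1 hx2 hfx => by
      obtain ⟨δ, hδpos, hδ⟩ := hloc (-x) (by linarith) (by linarith)
        (by rw [← hev x]; exact hfx)
      refine ⟨δ, hδpos, fun z hz => ?_⟩
      rw [hev z]
      apply hδ
      have : |(-z) - (-x)| = |z - x| := by rw [← abs_neg]; ring_nf
      rw [this]
      exact hz)
    (by rw [hev]; simpa using h0)
  rw [hev] at this
  simpa using this

lemma line_eq_of_two_points {l l' v v' : ℝ × ℝ} (hxx : v.1 ≠ v'.1)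
    (h1 : OnLine l v) (h2 : OnLine l v') (h3 : OnLine l' v) (h4 : OnLine l' v') :
    l = l' := by
  rw [OnLine, evalLine] at h1 h2 h3 h4
  have hsub : v.1 - v'.1 ≠ 0 := sub_ne_zero.2 hxx
  have h5 : (l.1 - l'.1) * (v.1 - v'.1) = 0 := by linear_combination h1 - h2 - h3 + h4
  have hslope : l.1 = l'.1 := by
    rcases mul_eq_zero.1 h5 with h | h
    · linarith [sub_eq_zero.1 h]
    · exact absurd h hsub
  have hint : l.2 = l'.2 := by linear_combination h1 - h3 - v.1 * hslope
  exact Prod.ext hslope hint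

lemma bridge (L : Finset (ℝ × ℝ)) (hL : L.Nonempty) (k : ℕ) (hk : k + 2 ≤ L.card)
    (Hall : ∀ w : ℝ × ℝ, 2 ≤ throughCount L w →
      k + 2 ≤ upperCount L w + throughCount L w)
    (v v' : ℝ × ℝ) (hv2 : 2 ≤ throughCount L v) (hv'2 : 2 ≤ throughCount L v')
    (hvu : upperCount L v ≤ k) (hv'u : upperCount L v' ≤ k) (hxx : v.1 < v'.1) :
    ∃ w : ℝ × ℝ, 2 ≤ throughCount L w ∧ upperCount L w ≤ k + 1 ∧
      v.1 < w.1 ∧ w.1 < v'.1 := by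
  classical
  have hk1 : k < L.card := by omega
  have hk2 : k + 1 < L.card := by omega
  set M := L.sup' hL (fun l => |l.1|) with hMdef
  have hM : ∀ l ∈ L, |l.1| ≤ M := fun l hl => Finset.le_sup' (fun l => |l.1|) hl
  have hM0 : 0 ≤ M := by
    obtain ⟨l, hl⟩ := hL
    exact le_trans (abs_nonneg l.1) (hM l hl)
  set x₄ := (v.1 + v'.1) / 2 with hx₄def
  have hx₄1 : v.1 < x₄ := by rw [hx₄def]; linarith
  have hx₄2 : x₄ < v'.1 := by rw [hx₄def]; linarith
  by_cases hc1 : ∃ x, v.1 < x ∧ x < v'.1 ∧ 2 ≤ throughCount L (x, fLev L k x)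
  · obtain ⟨x, h1, h2, h3⟩ := hc1
    exact ⟨(x, fLev L k x), h3, le_trans (fLev_upper_le hL hk1) (by omega), h1, h2⟩
  by_cases hc2 : ∃ x, v.1 < x ∧ x < v'.1 ∧ 2 ≤ throughCount L (x, fLev L (k+1) x)
  · obtain ⟨x, h1, h2, h3⟩ := hc2
    exact ⟨(x, fLev L (k+1) x), h3, fLev_upper_le hL hk2, h1, h2⟩
  exfalso
  push_neg at hc1 hc2
  have main : ∀ j : ℕ, j < L.card → k ≤ j → j ≤ k + 1 →
      (∀ x, v.1 < x → x < v'.1 → throughCount L (x, fLev L j x) < 2) →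
      ∃ l ∈ L, OnLine l v ∧ OnLine l v' ∧ evalLine l x₄ = fLev L j x₄ := by
    intro j hj hjk0 hjk hone
    have hHv := Hall v hv2
    have hHv' := Hall v' hv'2
    have ht1 : 1 ≤ throughCount L (x₄, fLev L j x₄) := fLev_through_ge hL hj
    rw [throughCount] at ht1
    obtain ⟨l, hlf⟩ := Finset.card_pos.1 (lt_of_lt_of_le zero_lt_one ht1)
    rw [Finset.mem_filter] at hlf
    have hlL : l ∈ L := hlf.1
    have hlon : evalLine l x₄ = fLev L j x₄ := hlf.2
    have hloc : ∀ x, v.1 < x → x < v'.1 → fLev L j x = evalLine l x →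
        ∃ δ > 0, ∀ z, |z - x| < δ → fLev L j z = evalLine l z := by
      intro x hx1 hx2 hfx
      exact fLev_local L hL j hj x l hlL hfx.symm (by
        have := hone x hx1 hx2
        omega)
    have hlip := fLev_lip L hL j hj M hM
    have hright := extend_right (fLev L j) M hM0 l hlip v.1 v'.1 x₄ hx₄1 hx₄2 hloc hlon.symm
    have hleft := extend_left (fLev L j) M hM0 l hlip v.1 v'.1 x₄ hx₄1 hx₄2 hloc hlon.symm
    have hvval : fLev L j v.1 = v.2 :=
      fLev_eq_of_point hL hj v (le_trans hvu (by omega)) (by omega)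
    have hv'val : fLev L j v'.1 = v'.2 :=
      fLev_eq_of_point hL hj v' (le_trans hv'u (by omega)) (by omega)
    exact ⟨l, hlL, by rw [OnLine, ← hleft, hvval], by rw [OnLine, ← hright, hv'val], hlon⟩
  obtain ⟨l, hlL, hlv, hlv', hlx⟩ := main k hk1 (le_refl _) (by omega) hc1
  obtain ⟨l', hl'L, hl'v, hl'v', hl'x⟩ := main (k+1) hk2 (by omega) (le_refl _) hc2
  have hlt : fLev L (k+1) x₄ < fLev L k x₄ := by
    have hle : fLev L (k+1) x₄ ≤ fLev L k x₄ := by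
      apply fLev_le hL hk2
      exact le_trans (fLev_above_le hL hk1) (by omega)
    rcases lt_or_eq_of_le hle with h | h
    · exact h
    · exfalso
      have h2 := fLev_ge_card hL hk2 (x := x₄)
      rw [h] at h2
      have h3 := filter_ge_split L (x₄, fLev L k x₄)
      have h4 : (L.filter (fun m => (x₄, fLev L k x₄).2 ≤ evalLine m (x₄, fLev L k x₄).1)).card
          = (L.filter (fun m => fLev L k x₄ ≤ evalLine m x₄)).card := rfl
      have h5 := fLev_upper_le hL hk1 (x := x₄)
      have h6 := hc1 x₄ hx₄1 hx₄2
      omega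
  have : l = l' := line_eq_of_two_points (ne_of_lt hxx) hlv hlv' hl'v hl'v'
  rw [this, hl'x] at hlx
  linarith

def interPt (a b : ℝ × ℝ) : ℝ × ℝ :=
  ((a.2 - b.2) / (b.1 - a.1), evalLine a ((a.2 - b.2) / (b.1 - a.1)))

def candSet (L : Finset (ℝ × ℝ)) : Finset (ℝ × ℝ) :=
  ((L ×ˢ L).filter (fun q => q.1.1 < q.2.1)).image (fun q => interPt q.1 q.2)

lemma interPt_eq {a b v : ℝ × ℝ} (hab : a.1 < b.1) (ha : OnLine a v) (hb : OnLine b v) :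
    interPt a b = v := by
  rw [OnLine, evalLine] at ha hb
  have hne : b.1 - a.1 ≠ 0 := sub_ne_zero.2 (ne_of_gt hab)
  have hx : (a.2 - b.2) / (b.1 - a.1) = v.1 := by
    rw [div_eq_iff hne]
    linarith
  apply Prod.ext
  · exact hx
  · show evalLine a ((a.2 - b.2) / (b.1 - a.1)) = v.2
    rw [hx, evalLine, ha]

lemma vertex_mem_candSet (L : Finset (ℝ × ℝ)) (v : ℝ × ℝ) (hv : 2 ≤ throughCount L v) :
    v ∈ candSet L := by
  rw [throughCount] at hv
  obtain ⟨a, ha, b, hb, hab⟩ := Finset.one_lt_card.1 (lt_of_lt_of_le one_lt_two hv)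
  rw [Finset.mem_filter] at ha hb
  have hslope : a.1 ≠ b.1 := by
    intro h
    apply hab
    apply Prod.ext h
    have h1 := ha.2; have h2 := hb.2
    rw [OnLine, evalLine] at h1 h2
    rw [h] at h1
    linarith
  rcases lt_or_gt_of_ne hslope with h | h
  · apply Finset.mem_image.2
    refine ⟨(a, b), Finset.mem_filter.2 ⟨Finset.mem_product.2 ⟨ha.1, hb.1⟩, h⟩, ?_⟩
    exact interPt_eq h ha.2 hb.2
  · apply Finset.mem_image.2
    refine ⟨(b, a), Finset.mem_filter.2 ⟨Finset.mem_product.2 ⟨hb.1, ha.1⟩, h⟩, ?_⟩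
    exact interPt_eq h hb.2 ha.2

lemma candSet_card (L : Finset (ℝ × ℝ)) :
    2 * (candSet L).card ≤ L.card * L.card - L.card := by
  classical
  set F := (L ×ˢ L).filter (fun q => q.1.1 < q.2.1) with hF
  set G := (L ×ˢ L).filter (fun q => q.2.1 < q.1.1) with hG
  have hcard : (candSet L).card ≤ F.card := Finset.card_image_le
  have hFG : F.card = G.card := by
    apply Finset.card_bij (fun q _ => Prod.swap q)
    · intro q hq
      rw [hF, Finset.mem_filter, Finset.mem_product] at hq
      rw [hG, Finset.mem_filter, Finset.mem_product]
      exact ⟨⟨hq.1.2, hq.1.1⟩, hq.2⟩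
    · intro q1 h1 q2 h2 he
      exact Prod.swap_injective he
    · intro q hq
      rw [hG, Finset.mem_filter, Finset.mem_product] at hq
      refine ⟨Prod.swap q, ?_, by simp⟩
      rw [hF, Finset.mem_filter, Finset.mem_product]
      exact ⟨⟨hq.1.2, hq.1.1⟩, hq.2⟩
  have hdisj : Disjoint F G := by
    apply Finset.disjoint_left.2
    intro q hqF hqG
    rw [hF, Finset.mem_filter] at hqF
    rw [hG, Finset.mem_filter] at hqG
    exact absurd hqG.2 (not_lt.2 (le_of_lt hqF.2))
  have hsub : F ∪ G ⊆ L.offDiag := by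
    intro q hq
    rw [Finset.mem_offDiag]
    rcases Finset.mem_union.1 hq with h | h <;>
      rw [Finset.mem_filter, Finset.mem_product] at h
    · exact ⟨h.1.1, h.1.2, fun he => absurd (congrArg Prod.fst he) (ne_of_lt h.2)⟩
    · exact ⟨h.1.1, h.1.2, fun he => absurd (congrArg Prod.fst he) (ne_of_gt h.2)⟩
  have h1 : F.card + G.card ≤ L.offDiag.card := by
    rw [← Finset.card_union_of_disjoint hdisj]
    exact Finset.card_le_card hsub
  rw [Finset.offDiag_card] at h1
  omega

lemma gap_count_aux (Y : Finset ℝ) : ∀ n : ℕ, ∀ X : Finset ℝ, X.card = n → X ⊆ Y →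
    (∀ a ∈ X, ∀ b ∈ X, a < b → (∀ c ∈ X, ¬(a < c ∧ c < b)) → ∃ y ∈ Y, a < y ∧ y < b) →
    ∀ hne : X.Nonempty,
      2 * X.card ≤ (Y.filter (fun z => z ≤ X.max' hne)).card + 1 := by
  intro n
  induction n with
  | zero =>
    intro X hc _ _ hne
    exact absurd hc (Finset.Nonempty.card_pos hne).ne'
  | succ n ih =>
    intro X hc hXY H hne
    by_cases hn : n = 0
    · subst hn
      have hmY : X.max' hne ∈ Y.filter (fun z => z ≤ X.max' hne) :=
        Finset.mem_filter.2 ⟨hXY (X.max'_mem hne), le_refl _⟩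
      have := Finset.card_pos.2 ⟨_, hmY⟩
      omega
    · set m := X.max' hne with hm
      set X' := X.erase m with hX'
      have hX'c : X'.card = n := by
        rw [hX', Finset.card_erase_of_mem (X.max'_mem hne), hc]
        omega
      have hX'ne : X'.Nonempty := Finset.card_pos.1 (by omega)
      set m' := X'.max' hX'ne with hm'
      have hm'X' : m' ∈ X' := X'.max'_mem hX'ne
      have hm'X : m' ∈ X := Finset.mem_of_mem_erase hm'X'
      have hm'm : m' < m := by
        have h1 : m' ≠ m := Finset.ne_of_mem_erase hm'X'
        exact lt_of_le_of_ne (Finset.le_max' X m' hm'X) h1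
      have hcons : ∀ c ∈ X, ¬(m' < c ∧ c < m) := by
        rintro c hcX ⟨h1, h2⟩
        have hcX' : c ∈ X' := Finset.mem_erase.2 ⟨ne_of_lt h2, hcX⟩
        exact absurd (Finset.le_max' X' c hcX') (not_le.2 h1)
      obtain ⟨y, hyY, hy1, hy2⟩ := H m' hm'X m (X.max'_mem hne) hm'm hcons
      have H' : ∀ a ∈ X', ∀ b ∈ X', a < b →
          (∀ c ∈ X', ¬(a < c ∧ c < b)) → ∃ y ∈ Y, a < y ∧ y < b := by
        intro a ha b hb hab hcons'
        apply H a (Finset.mem_of_mem_erase ha) b (Finset.mem_of_mem_erase hb) hab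
        intro c hcX hcc
        have hbm' : b ≤ m' := Finset.le_max' X' b hb
        have hcm : c ≠ m := ne_of_lt (lt_trans hcc.2 (lt_of_le_of_lt hbm' hm'm))
        exact hcons' c (Finset.mem_erase.2 ⟨hcm, hcX⟩) hcc
      have ihX' := ih X' hX'c (subset_trans (Finset.erase_subset m X) hXY) H' hX'ne
      have hynotin : y ∉ Y.filter (fun z => z ≤ m') := by
        intro h
        exact absurd (Finset.mem_filter.1 h).2 (not_le.2 hy1)
      have hmnotin : m ∉ insert y (Y.filter (fun z => z ≤ m')) := by
        intro h
        rcases Finset.mem_insert.1 h with h | h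
        · exact absurd h (ne_of_gt hy2)
        · exact absurd (Finset.mem_filter.1 h).2 (not_le.2 hm'm)
      have hsub : insert m (insert y (Y.filter (fun z => z ≤ m')))
          ⊆ Y.filter (fun z => z ≤ m) := by
        intro z hz
        rcases Finset.mem_insert.1 hz with h | h
        · rw [h]
          exact Finset.mem_filter.2 ⟨hXY (X.max'_mem hne), le_refl _⟩
        rcases Finset.mem_insert.1 h with h | h
        · rw [h]
          exact Finset.mem_filter.2 ⟨hyY, le_of_lt hy2⟩
        · rcases Finset.mem_filter.1 h with ⟨h1, h2⟩
          exact Finset.mem_filter.2 ⟨h1, le_trans h2 (le_of_lt hm'm)⟩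
      have hcards := Finset.card_le_card hsub
      rw [Finset.card_insert_of_notMem hmnotin,
        Finset.card_insert_of_notMem hynotin] at hcards
      rw [← hm'] at ihX'
      omega

lemma gap_count (X Y : Finset ℝ) (hXY : X ⊆ Y)
    (H : ∀ a ∈ X, ∀ b ∈ X, a < b → (∀ c ∈ X, ¬(a < c ∧ c < b)) →
      ∃ y ∈ Y, a < y ∧ y < b) :
    2 * X.card ≤ Y.card + 1 := by
  rcases X.eq_empty_or_nonempty with h | h
  · simp [h]
  · have := gap_count_aux Y X.card X rfl hXY H h
    have h2 : (Y.filter (fun z => z ≤ X.max' h)).card ≤ Y.card :=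
      Finset.card_le_card (Finset.filter_subset _ _)
    omega

lemma main_bound (L : Finset (ℝ × ℝ)) (hL : L.Nonempty) (hn2 : 2 ≤ L.card)
    (henv : ∃ p q : ℝ × ℝ, p ≠ q ∧ EnvelopeVertex L hL p ∧ EnvelopeVertex L hL q) :
    ∃ v : ℝ × ℝ, 2 ≤ throughCount L v ∧
      upperCount L v + throughCount L v ≤ Nat.log 2 (L.card ^ 2) := by
  classical
  set K := Nat.log 2 (L.card ^ 2) with hKdef
  by_contra hcon
  push_neg at hcon
  have Hall : ∀ w : ℝ × ℝ, 2 ≤ throughCount L w →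
      K + 1 ≤ upperCount L w + throughCount L w := by
    intro w hw
    have := hcon w hw
    omega
  obtain ⟨p, q, hpq, hp, hq⟩ := henv
  have hp2 := hp.2
  have hq2 := hq.2
  have hpu : upperCount L p = 0 := env_upper_zero L hL p hp
  have hqu : upperCount L q = 0 := env_upper_zero L hL q hq
  have hKn : K + 1 ≤ L.card := by
    by_contra h
    push_neg at h
    have h1 := Hall p hp2
    have h2 := ut_le_card L p
    omega
  set V : ℕ → Finset (ℝ × ℝ) := fun k => (candSet L).filter
      (fun w => 2 ≤ throughCount L w ∧ upperCount L w ≤ k) with hV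
  have hinj : ∀ k, k ≤ K → Set.InjOn Prod.fst ((V k) : Set (ℝ × ℝ)) := by
    intro k hk v hvm w hwm he
    rw [Finset.mem_coe, hV, Finset.mem_filter] at hvm hwm
    rcases lt_trichotomy v.2 w.2 with h | h | h
    · exfalso
      have h1 := vert_above L w v he.symm h
      have h2 := Hall w hwm.2.1
      have h3 := hvm.2.2
      omega
    · exact Prod.ext he h
    · exfalso
      have h1 := vert_above L v w he h
      have h2 := Hall v hvm.2.1
      have h3 := hwm.2.2
      omega
  have hVmono : ∀ k, V k ⊆ V (k+1) := by
    intro k w hw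
    rw [hV, Finset.mem_filter] at hw ⊢
    exact ⟨hw.1, hw.2.1, le_trans hw.2.2 (Nat.le_succ k)⟩
  have grow : ∀ k, k + 1 ≤ K → 2 * (V k).card ≤ (V (k+1)).card + 1 := by
    intro k hk1
    set X := (V k).image Prod.fst with hX
    set Y := (V (k+1)).image Prod.fst with hY
    have hXc : X.card = (V k).card :=
      Finset.card_image_of_injOn (hinj k (by omega))
    have hYc : Y.card = (V (k+1)).card :=
      Finset.card_image_of_injOn (hinj (k+1) hk1)
    have hXY : X ⊆ Y := Finset.image_subset_image (hVmono k)
    have hgap := gap_count X Y hXY ?_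
    · omega
    intro a haX b hbX hab _
    obtain ⟨va, hva, hva1⟩ := Finset.mem_image.1 haX
    obtain ⟨vb, hvb, hvb1⟩ := Finset.mem_image.1 hbX
    rw [hV, Finset.mem_filter] at hva hvb
    have hxx : va.1 < vb.1 := by rw [hva1, hvb1]; exact hab
    obtain ⟨w, hw2, hwu, hw1, hw1'⟩ := bridge L hL k (by omega)
      (fun w hw => by have := Hall w hw; omega)
      va vb hva.2.1 hvb.2.1 hva.2.2 hvb.2.2 hxx
    refine ⟨w.1, ?_, ?_, ?_⟩
    · apply Finset.mem_image_of_mem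
      rw [hV, Finset.mem_filter]
      exact ⟨vertex_mem_candSet L w hw2, hw2, hwu⟩
    · rw [← hva1]; exact hw1
    · rw [← hvb1]; exact hw1'
  have pow_le : ∀ k, k ≤ K → 2 ^ k + 1 ≤ (V k).card := by
    intro k
    induction k with
    | zero =>
      intro _
      have hpV : p ∈ V 0 := by
        rw [hV, Finset.mem_filter]
        exact ⟨vertex_mem_candSet L p hp2, hp2, by omega⟩
      have hqV : q ∈ V 0 := by
        rw [hV, Finset.mem_filter]
        exact ⟨vertex_mem_candSet L q hq2, hq2, by omega⟩
      have := Finset.one_lt_card.2 ⟨p, hpV, q, hqV, hpq⟩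
      simp only [pow_zero]; omega
    | succ k ih =>
      intro hk1
      have h1 := ih (by omega)
      have h2 := grow k hk1
      have h3 : 2 ^ (k+1) = 2 * 2 ^ k := by ring
      omega
  have hfin := pow_le K (le_refl _)
  have hVP : (V K).card ≤ (candSet L).card :=
    Finset.card_le_card (Finset.filter_subset _ _)
  have hPn := candSet_card L
  have hpow : L.card ^ 2 < 2 ^ (K + 1) := Nat.lt_pow_succ_log_self (by norm_num) _
  have hnn : L.card ^ 2 = L.card * L.card := sq L.card
  have h2K : 2 ^ (K+1) = 2 * 2 ^ K := by ring
  rw [hnn, h2K] at hpow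
  omega

end fLevFacts

/-- Combination of Theorem 1.1 and Lemma 2.1: if the upper envelope of `L` has at least
two vertices, then there is `k₀ ≤ 2·log₂ n` such that some vertex of the arrangement lies
strictly above the `k₀`-upper level (i.e. the lines through or above it number at most
`k₀`), and the maximum level of a vertex of the arrangement equals `n - k₀`. -/
theorem stmt19 (L : Finset (ℝ × ℝ)) (n : ℕ) (hn : L.card = n) (hn2 : 2 ≤ n)
    (hL : L.Nonempty)
    (henv : ∃ p q : ℝ × ℝ, p ≠ q ∧ EnvelopeVertex L hL p ∧ EnvelopeVertex L hL q) :
    ∃ k₀ : ℕ, (k₀ : ℝ) ≤ 2 * Real.logb 2 n ∧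
      (∃ v : ℝ × ℝ, 2 ≤ throughCount L v ∧ upperCount L v + throughCount L v ≤ k₀) ∧
      (∃ v : ℝ × ℝ, 2 ≤ throughCount L v ∧ levelCount L v = n - k₀) ∧
      (∀ w : ℝ × ℝ, 2 ≤ throughCount L w → levelCount L w ≤ n - k₀) := by
  classical
  subst hn
  obtain ⟨v₀, hv₀2, hv₀K⟩ := main_bound L hL hn2 henv
  set S := {m : ℕ | ∃ v : ℝ × ℝ, 2 ≤ throughCount L v ∧
    upperCount L v + throughCount L v = m} with hS
  have hSne : S.Nonempty := ⟨_, v₀, hv₀2, rfl⟩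
  set k₀ := sInf S with hk₀
  obtain ⟨v₁, hv₁2, hv₁e⟩ : k₀ ∈ S := Nat.sInf_mem hSne
  have hmin : ∀ w : ℝ × ℝ, 2 ≤ throughCount L w →
      k₀ ≤ upperCount L w + throughCount L w := by
    intro w hw
    exact Nat.sInf_le ⟨w, hw, rfl⟩
  have hk₀K : k₀ ≤ Nat.log 2 (L.card ^ 2) := le_trans (hmin v₀ hv₀2) hv₀K
  refine ⟨k₀, ?_, ⟨v₁, hv₁2, le_of_eq hv₁e⟩, ⟨v₁, hv₁2, ?_⟩, ?_⟩
  · set K := Nat.log 2 (L.card ^ 2) with hK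
    have h1 : (2:ℕ) ^ K ≤ L.card ^ 2 := Nat.pow_log_le_self 2 (by positivity)
    have hcard0 : (0:ℝ) < (L.card : ℝ) := by
      have : (0:ℕ) < L.card := by omega
      exact_mod_cast this
    have h2 : ((2:ℝ)) ^ K ≤ ((L.card : ℝ)) ^ 2 := by exact_mod_cast h1
    have h3 : Real.logb 2 ((2:ℝ) ^ K) ≤ Real.logb 2 (((L.card : ℝ)) ^ 2) :=
      Real.logb_le_logb_of_le (by norm_num) (by positivity) h2
    rw [Real.logb_pow, Real.logb_pow, Real.logb_self_eq_one (by norm_num), mul_one] at h3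
    calc (k₀ : ℝ) ≤ (K : ℝ) := by exact_mod_cast hk₀K
      _ ≤ 2 * Real.logb 2 (L.card : ℝ) := h3
  · have hpart := partition_count L v₁
    omega
  · intro w hw
    have h1 := hmin w hw
    have h2 := partition_count L w
    omega
end
end
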